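/- Let f be a complex-valued arithmetic function and let η ∈ (0,2) be fixed. Assume there is a constant C > 0 such that ∑_{n ≤ x} |f(n)|² ≤ C x^η for all real x ≥ 1. Then the series C_f = ∑_{n=1}^∞ f(n)/(n(n+1)) converges and S_f(x) = C_f · x + O(x^{(1+η)/3}) as x → ∞. -/

import Mathlib

open Finset Filter Asymptotics

private lemma one_add_mul_le_rpow_neg' {s q : ℝ} (hs : -1 < s) (hq1 : -1 ≤ q) (hq0 : q ≤ 0) :
    1 + q * s ≤ (1 + s) ^ q := by
  have h2 : (0:ℝ) < 1 + s := by linarith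
  have h1 : (1 + s) ^ (-q) ≤ 1 + (-q) * s :=
    rpow_one_add_le_one_add_mul_self hs.le (by linarith) (by linarith)
  have h3 : 0 < (1 + s) ^ (-q) := Real.rpow_pos_of_pos h2 _
  have h4 : 0 < 1 + (-q) * s := lt_of_lt_of_le h3 h1
  have hA : 0 < (1 + s) ^ q := Real.rpow_pos_of_pos h2 _
  have h5 : (1 + s) ^ q * (1 + s) ^ (-q) = 1 := by
    rw [← Real.rpow_add h2]; simp
  have h6 : 1 ≤ (1 + s) ^ q * (1 + (-q) * s) := by
    calc (1:ℝ) = (1 + s) ^ q * (1 + s) ^ (-q) := h5.symm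
    _ ≤ (1 + s) ^ q * (1 + (-q) * s) := by
        exact mul_le_mul_of_nonneg_left h1 hA.le
  nlinarith [sq_nonneg (q * s)]

private lemma rpow_step' {r : ℝ} (hr0 : -1 < r) (hr1 : r < 0) {a : ℝ} (ha : 1 ≤ a) :
    (-r) * (a + 1) ^ (r - 1) ≤ a ^ r - (a + 1) ^ r := by
  have ha0 : (0:ℝ) < a := lt_of_lt_of_le zero_lt_one ha
  have hb : (0:ℝ) < a + 1 := by linarith
  have hs : (-1:ℝ) < -1 / (a + 1) := by
    rw [neg_div]
    have : 1 / (a + 1) < 1 := by rw [div_lt_one hb]; linarith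
    linarith
  have key := one_add_mul_le_rpow_neg' hs hr0.le hr1.le
  have h1 : 1 + (-1 / (a + 1)) = a / (a + 1) := by field_simp; ring
  rw [h1, Real.div_rpow ha0.le hb.le] at key
  -- key : 1 + r * (-1 / (a + 1)) ≤ a ^ r / (a + 1) ^ r
  have h3 : (0:ℝ) < (a + 1) ^ r := Real.rpow_pos_of_pos hb r
  have h4 : (a + 1) ^ r / (a + 1) = (a + 1) ^ (r - 1) := by
    rw [Real.rpow_sub hb, Real.rpow_one]
  have h5 := mul_le_mul_of_nonneg_right key h3.le
  rw [div_mul_cancel₀ _ h3.ne'] at h5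
  have h6 : (1 + r * (-1 / (a + 1))) * (a + 1) ^ r
      = (a + 1) ^ r + r * (-((a + 1) ^ (r - 1))) := by
    rw [← h4]; field_simp
  rw [h6] at h5
  linarith

private lemma sum_Ioc_telescope' (g : ℕ → ℝ) {M N : ℕ} (h : M ≤ N) :
    ∑ m ∈ Finset.Ioc M N, (g m - g (m + 1)) = g (M + 1) - g (N + 1) := by
  have h0 : Finset.Ioc M N = Finset.Ico (M + 1) (N + 1) := by
    ext k; simp only [Finset.mem_Ioc, Finset.mem_Ico]; omega
  rw [h0, Finset.sum_Ico_eq_sum_range]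
  have hN : N + 1 - (M + 1) = N - M := by omega
  rw [hN]
  have e1 : ∑ k ∈ Finset.range (N - M), (g (M + 1 + k) - g (M + 1 + k + 1))
      = g (M + 1 + 0) - g (M + 1 + (N - M)) :=
    Finset.sum_range_sub' (fun i => g (M + 1 + i)) (N - M)
  rw [e1]
  congr 2
  omega

private lemma sum_Ioc_rpow_le' {r : ℝ} (hr0 : -1 < r) (hr1 : r < 0) {M N : ℕ} (hM : 1 ≤ M) :
    ∑ m ∈ Finset.Ioc M N, (m : ℝ) ^ (r - 1) ≤ (M : ℝ) ^ r / (-r) := by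
  have hrpos : (0:ℝ) < -r := by linarith
  rcases le_or_gt M N with h | h
  · set g : ℕ → ℝ := fun k => ((k - 1 : ℕ) : ℝ) ^ r with hg
    have step : ∀ m ∈ Finset.Ioc M N, (m : ℝ) ^ (r - 1) ≤ (g m - g (m + 1)) / (-r) := by
      intro m hm
      rw [Finset.mem_Ioc] at hm
      have hm2 : 2 ≤ m := by omega
      have ha : (1:ℝ) ≤ ((m - 1 : ℕ) : ℝ) := by
        have : (1:ℕ) ≤ m - 1 := by omega
        exact_mod_cast this
      have hcast : ((m - 1 : ℕ) : ℝ) + 1 = (m : ℝ) := by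
        have : (m - 1) + 1 = m := by omega
        exact_mod_cast congrArg (Nat.cast : ℕ → ℝ) this
      have := rpow_step' hr0 hr1 ha
      rw [hcast] at this
      rw [le_div_iff₀ hrpos]
      have hgm : g m = ((m - 1 : ℕ) : ℝ) ^ r := rfl
      have hgm1 : g (m + 1) = (m : ℝ) ^ r := by
        simp only [hg, Nat.add_sub_cancel]
      rw [hgm, hgm1]
      linarith [this]
    calc ∑ m ∈ Finset.Ioc M N, (m : ℝ) ^ (r - 1)
        ≤ ∑ m ∈ Finset.Ioc M N, (g m - g (m + 1)) / (-r) := Finset.sum_le_sum step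
      _ = (∑ m ∈ Finset.Ioc M N, (g m - g (m + 1))) / (-r) := by rw [Finset.sum_div]
      _ = (g (M + 1) - g (N + 1)) / (-r) := by rw [sum_Ioc_telescope' g h]
      _ ≤ (M : ℝ) ^ r / (-r) := by
          have h1 : g (M + 1) = (M : ℝ) ^ r := by
            simp only [hg, Nat.add_sub_cancel]
          have h2 : 0 ≤ g (N + 1) := Real.rpow_nonneg (Nat.cast_nonneg _) _
          gcongr
          linarith
  · rw [Finset.Ioc_eq_empty (by omega)]
    simp only [Finset.sum_empty]
    positivity

private lemma tsum_tail_rpow' {r : ℝ} (hr0 : -1 < r) (hr1 : r < 0) {N : ℕ} (hN : 1 ≤ N) :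
    ∑' n : ℕ, ((n + N + 1 : ℕ) : ℝ) ^ (r - 1) ≤ (N : ℝ) ^ r / (-r) := by
  apply Real.tsum_le_of_sum_range_le (fun n => Real.rpow_nonneg (Nat.cast_nonneg _) _)
  intro k
  have h1 : ∑ i ∈ Finset.range k, ((i + N + 1 : ℕ) : ℝ) ^ (r - 1)
      = ∑ m ∈ Finset.Ioc N (N + k), (m : ℝ) ^ (r - 1) := by
    have h0 : Finset.Ioc N (N + k) = Finset.Ico (N + 1) (N + 1 + k) := by
      ext m; simp only [Finset.mem_Ioc, Finset.mem_Ico]; omega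
    rw [h0, Finset.sum_Ico_eq_sum_range]
    have h2 : N + 1 + k - (N + 1) = k := by omega
    rw [h2]
    apply Finset.sum_congr rfl
    intro i _
    congr 2
    omega
  rw [h1]
  exact sum_Ioc_rpow_le' hr0 hr1 hN

private lemma rpow_succ_sub_le' {p : ℝ} (hp0 : 0 ≤ p) (hp1 : p ≤ 1) {a : ℝ} (ha : 1 ≤ a) :
    (a + 1) ^ p - a ^ p ≤ p * a ^ (p - 1) := by
  have ha0 : (0:ℝ) < a := lt_of_lt_of_le zero_lt_one ha
  have hs : (-1:ℝ) ≤ 1 / a := by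
    have : (0:ℝ) ≤ 1 / a := by positivity
    linarith
  have h1 : (1 + 1 / a) ^ p ≤ 1 + p * (1 / a) :=
    rpow_one_add_le_one_add_mul_self hs hp0 hp1
  have h2 : a + 1 = a * (1 + 1 / a) := by field_simp
  have h3 : (a + 1) ^ p = a ^ p * (1 + 1 / a) ^ p := by
    rw [h2, Real.mul_rpow ha0.le (by positivity)]
  have h4 : a ^ p / a = a ^ (p - 1) := by
    rw [Real.rpow_sub ha0, Real.rpow_one]
  have h5 : (0:ℝ) < a ^ p := Real.rpow_pos_of_pos ha0 _
  calc (a + 1) ^ p - a ^ p = a ^ p * (1 + 1 / a) ^ p - a ^ p := by rw [h3]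
    _ ≤ a ^ p * (1 + p * (1 / a)) - a ^ p := by nlinarith
    _ = p * (a ^ p / a) := by ring
    _ = p * a ^ (p - 1) := by rw [h4]

private lemma sum_floor_ident' (f : ℕ → ℂ) (N : ℕ) :
    ∑ n ∈ Finset.Icc 1 N, f (N / n)
      = ∑ m ∈ Finset.Icc 1 N, ((N / m - N / (m + 1) : ℕ) : ℂ) * f m := by
  have hmaps : ∀ n ∈ Finset.Icc 1 N, N / n ∈ Finset.Icc 1 N := by
    intro n hn
    rw [Finset.mem_Icc] at hn ⊢
    refine ⟨(Nat.le_div_iff_mul_le (by omega)).2 (by omega), Nat.div_le_self N n⟩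
  rw [← Finset.sum_fiberwise_of_maps_to hmaps (fun n => f (N / n))]
  apply Finset.sum_congr rfl
  intro m hm
  rw [Finset.mem_Icc] at hm
  obtain ⟨hm1, hm2⟩ := hm
  have hfilter : (Finset.Icc 1 N).filter (fun n => N / n = m)
      = Finset.Ioc (N / (m + 1)) (N / m) := by
    ext n
    simp only [Finset.mem_filter, Finset.mem_Icc, Finset.mem_Ioc]
    constructor
    · rintro ⟨⟨h1, h2⟩, hEq⟩
      constructor
      · by_contra hc
        push_neg at hc
        have h3 : n * (m + 1) ≤ N := (Nat.le_div_iff_mul_le (by omega)).1 hc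
        have h4 : (m + 1) * n ≤ N := by rwa [Nat.mul_comm] at h3
        have h5 : m + 1 ≤ N / n := (Nat.le_div_iff_mul_le (by omega)).2 h4
        omega
      · have h3 : N / n * n ≤ N := Nat.div_mul_le_self N n
        have h4 : m * n ≤ N := by rwa [hEq] at h3
        have h5 : n * m ≤ N := by rwa [Nat.mul_comm] at h4
        exact (Nat.le_div_iff_mul_le (by omega)).2 h5
    · rintro ⟨hlt, hle⟩
      have hn1 : 1 ≤ n := lt_of_le_of_lt (Nat.zero_le _) hlt
      have hnm : n * m ≤ N := (Nat.le_div_iff_mul_le (by omega)).1 hle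
      have hmn : m * n ≤ N := by rwa [Nat.mul_comm] at hnm
      have h6 : m ≤ N / n := (Nat.le_div_iff_mul_le (by omega)).2 hmn
      have h7 : N / n < m + 1 := by
        by_contra hc
        push_neg at hc
        have h8 : (m + 1) * n ≤ N := (Nat.le_div_iff_mul_le (by omega)).1 hc
        have h9 : n * (m + 1) ≤ N := by rwa [Nat.mul_comm] at h8
        have h10 : n ≤ N / (m + 1) := (Nat.le_div_iff_mul_le (by omega)).2 h9
        omega
      exact ⟨⟨hn1, le_trans hle (Nat.div_le_self N m)⟩, by omega⟩
  rw [hfilter]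
  have hcongr : ∀ n ∈ Finset.Ioc (N / (m + 1)) (N / m), f (N / n) = f m := by
    intro n hn
    have hmem : n ∈ (Finset.Icc 1 N).filter (fun n => N / n = m) := by
      rw [hfilter]; exact hn
    rw [Finset.mem_filter] at hmem
    rw [hmem.2]
  rw [Finset.sum_congr rfl hcongr, Finset.sum_const, Nat.card_Ioc, nsmul_eq_mul]

set_option maxHeartbeats 4000000 in
/-- If `f` is a complex-valued arithmetic function, `η ∈ (0,2)` and
`∑_{n ≤ x} |f(n)|² ≤ C x^η` for all `x ≥ 1`, then the series
`C_f = ∑ f(n)/(n(n+1))` converges and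
`S_f(x) = ∑_{n ≤ x} f(⌊x/n⌋₊) = C_f x + O(x^{(1+η)/3})` as `x → ∞`. -/
theorem sum_floor_asymptotic (f : ℕ → ℂ) (η : ℝ) (hη₀ : 0 < η) (hη₂ : η < 2)
    (C : ℝ) (hC : 0 < C)
    (hf : ∀ x : ℝ, 1 ≤ x → ∑ n ∈ Finset.Icc 1 ⌊x⌋₊, ‖f n‖ ^ 2 ≤ C * x ^ η) :
    Summable (fun n : ℕ => f (n + 1) / (((n : ℂ) + 1) * ((n : ℂ) + 2))) ∧
    (fun x : ℝ => (∑ n ∈ Finset.Icc 1 ⌊x⌋₊, f ⌊x / (n : ℝ)⌋₊) -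
        (∑' n : ℕ, f (n + 1) / (((n : ℂ) + 1) * ((n : ℂ) + 2))) * (x : ℂ))
      =O[atTop] fun x : ℝ => x ^ ((1 + η) / 3) := by
  set p : ℝ := η / 2 with hp_def
  have hp0 : 0 < p := by positivity
  have hp1 : p < 1 := by rw [hp_def]; linarith
  have hsC : 0 ≤ Real.sqrt C := Real.sqrt_nonneg C
  set g : ℕ → ℂ := fun n => f (n + 1) / (((n : ℂ) + 1) * ((n : ℂ) + 2)) with hg_def
  -- pointwise bound on ‖f m‖
  have hpoint : ∀ m : ℕ, 1 ≤ m → ‖f m‖ ≤ Real.sqrt C * (m : ℝ) ^ p := by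
    intro m hm
    have hx1 : (1 : ℝ) ≤ (m : ℝ) := by exact_mod_cast hm
    have h0 := hf (m : ℝ) hx1
    rw [Nat.floor_natCast] at h0
    have h1 : ‖f m‖ ^ 2 ≤ C * (m : ℝ) ^ η :=
      le_trans (Finset.single_le_sum (f := fun n => ‖f n‖ ^ 2)
        (fun i _ => sq_nonneg _) (Finset.mem_Icc.2 ⟨hm, le_refl m⟩)) h0
    have h2 : ‖f m‖ ≤ Real.sqrt (C * (m : ℝ) ^ η) := by
      rw [Real.le_sqrt (norm_nonneg _) (by positivity)]
      exact h1
    calc ‖f m‖ ≤ Real.sqrt (C * (m : ℝ) ^ η) := h2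
      _ = Real.sqrt C * Real.sqrt ((m : ℝ) ^ η) := Real.sqrt_mul hC.le _
      _ = Real.sqrt C * (m : ℝ) ^ p := by
          congr 1
          rw [Real.sqrt_eq_rpow, ← Real.rpow_mul (Nat.cast_nonneg m)]
          congr 1
          rw [hp_def]; ring
  -- norm bound on g
  have hgnorm : ∀ n : ℕ, ‖g n‖ ≤ Real.sqrt C * ((n + 1 : ℕ) : ℝ) ^ (p - 2) := by
    intro n
    have hn1 : (0:ℝ) < (n : ℝ) + 1 := by positivity
    have hn2 : (0:ℝ) < (n : ℝ) + 2 := by positivity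
    have e1 : ‖((n : ℂ) + 1)‖ = (n : ℝ) + 1 := by
      rw [show ((n : ℂ) + 1) = ((n + 1 : ℕ) : ℂ) by push_cast; ring, Complex.norm_natCast]
      push_cast; ring
    have e2 : ‖((n : ℂ) + 2)‖ = (n : ℝ) + 2 := by
      rw [show ((n : ℂ) + 2) = ((n + 2 : ℕ) : ℂ) by push_cast; ring, Complex.norm_natCast]
      push_cast; ring
    have hd : ‖g n‖ = ‖f (n + 1)‖ / (((n : ℝ) + 1) * ((n : ℝ) + 2)) := by
      rw [hg_def]
      simp only [norm_div, norm_mul, e1, e2]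
    have hb : ‖f (n + 1)‖ ≤ Real.sqrt C * ((n + 1 : ℕ) : ℝ) ^ p := hpoint (n + 1) (by omega)
    have hcast : ((n + 1 : ℕ) : ℝ) = (n : ℝ) + 1 := by push_cast; ring
    rw [hd]
    calc ‖f (n + 1)‖ / (((n : ℝ) + 1) * ((n : ℝ) + 2))
        ≤ (Real.sqrt C * ((n + 1 : ℕ) : ℝ) ^ p) / (((n : ℝ) + 1) * ((n : ℝ) + 1)) := by
          apply div_le_div₀ (by positivity) hb (by positivity)
          nlinarith [hn1]
      _ = Real.sqrt C * ((n + 1 : ℕ) : ℝ) ^ (p - 2) := by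
          rw [hcast, show p - 2 = p - 1 - 1 by ring,
            Real.rpow_sub hn1, Real.rpow_sub hn1, Real.rpow_one]
          field_simp
  have hsummable_norm : Summable (fun n => ‖g n‖) := by
    apply Summable.of_nonneg_of_le (fun n => norm_nonneg _) hgnorm
    apply Summable.mul_left
    exact (summable_nat_add_iff 1).2 (Real.summable_nat_rpow.2 (by linarith))
  have hsum : Summable g := hsummable_norm.of_norm
  refine ⟨hsum, ?_⟩
  rw [Asymptotics.isBigO_iff]
  refine ⟨Real.sqrt C + 4 * Real.sqrt C / (1 - p) + 2 * Real.sqrt C / (1 - p), ?_⟩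
  filter_upwards [eventually_ge_atTop (3:ℝ)] with x hx3
  have hx1 : (1:ℝ) ≤ x := by linarith
  have hx0 : (0:ℝ) < x := by linarith
  set β : ℝ := (1 + η) / 3 with hβ_def
  set N : ℕ := ⌊x⌋₊ with hN_def
  set M : ℕ := ⌊x ^ ((2:ℝ)/3)⌋₊ with hM_def
  have hNle : (N : ℝ) ≤ x := Nat.floor_le hx0.le
  have hNgt : x < N + 1 := Nat.lt_floor_add_one x
  have hN1 : 1 ≤ N := Nat.le_floor (by exact_mod_cast hx1)
  have hN1R : (1:ℝ) ≤ (N:ℝ) := by exact_mod_cast hN1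
  have hNhalf : x / 2 ≤ (N : ℝ) := by linarith
  have hNpos : (0:ℝ) < (N:ℝ) := by linarith
  have hx23pos : (0:ℝ) < x ^ ((2:ℝ)/3) := Real.rpow_pos_of_pos hx0 _
  have hx23one : (1:ℝ) ≤ x ^ ((2:ℝ)/3) := by
    have := Real.rpow_le_rpow_of_exponent_le hx1 (show (0:ℝ) ≤ (2:ℝ)/3 by norm_num)
    rwa [Real.rpow_zero] at this
  have hx23two : (2:ℝ) ≤ x ^ ((2:ℝ)/3) := by
    have h8 : (8:ℝ) ≤ x ^ ((2:ℕ):ℝ) := by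
      rw [Real.rpow_natCast]
      nlinarith
    have e8 : (8:ℝ) ^ ((1:ℝ)/3) = 2 := by
      rw [show (8:ℝ) = 2 ^ ((3:ℕ):ℝ) by rw [Real.rpow_natCast]; norm_num,
        ← Real.rpow_mul (by norm_num : (0:ℝ) ≤ 2)]
      norm_num
    calc (2:ℝ) = (8:ℝ) ^ ((1:ℝ)/3) := e8.symm
      _ ≤ (x ^ ((2:ℕ):ℝ)) ^ ((1:ℝ)/3) :=
          Real.rpow_le_rpow (by norm_num) h8 (by norm_num)
      _ = x ^ ((2:ℝ)/3) := by
          rw [← Real.rpow_mul hx0.le]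
          norm_num
  have hM1 : 1 ≤ M := Nat.le_floor (by exact_mod_cast hx23one)
  have hMpos : (0:ℝ) < (M:ℝ) := by
    have : (1:ℝ) ≤ (M:ℝ) := by exact_mod_cast hM1
    linarith
  have hMle : (M : ℝ) ≤ x ^ ((2:ℝ)/3) := Nat.floor_le hx23pos.le
  have hMge : x ^ ((2:ℝ)/3) / 2 ≤ (M:ℝ) := by
    have := Nat.lt_floor_add_one (x ^ ((2:ℝ)/3))
    rw [← hM_def] at this
    linarith
  have hMN : M ≤ N := by
    apply Nat.floor_mono
    calc x ^ ((2:ℝ)/3) ≤ x ^ (1:ℝ) :=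
          Real.rpow_le_rpow_of_exponent_le hx1 (by norm_num)
      _ = x := Real.rpow_one x
  have h1p : (0:ℝ) < 1 - p := by linarith
  -- the divisor-count function and the error term
  set b : ℕ → ℝ := fun k => ((N / k : ℕ) : ℝ) with hb_def
  have hble : ∀ k : ℕ, 1 ≤ k → b k ≤ x / (k:ℝ) := by
    intro k hk
    have e : (N / k : ℕ) = ⌊x / (k:ℝ)⌋₊ := (Nat.floor_div_natCast x k).symm
    simp only [hb_def, e]
    exact Nat.floor_le (by positivity)
  have hbgt : ∀ k : ℕ, 1 ≤ k → x / (k:ℝ) - 1 < b k := by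
    intro k hk
    have h := Nat.lt_floor_add_one (x / (k:ℝ))
    have e : (N / k : ℕ) = ⌊x / (k:ℝ)⌋₊ := (Nat.floor_div_natCast x k).symm
    simp only [hb_def, e]
    linarith
  have hb0 : ∀ k : ℕ, 0 ≤ b k := fun k => Nat.cast_nonneg _
  have hbmono : ∀ k : ℕ, 1 ≤ k → b (k+1) ≤ b k := by
    intro k hk
    simp only [hb_def]
    exact_mod_cast Nat.div_le_div_left (Nat.le_succ k) hk
  have hble' : ∀ m : ℕ, 1 ≤ m → b (m+1) ≤ x / ((m:ℝ)+1) := by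
    intro m hm
    have := hble (m+1) (by omega)
    rwa [Nat.cast_add_one] at this
  have hbgt' : ∀ m : ℕ, 1 ≤ m → x / ((m:ℝ)+1) - 1 < b (m+1) := by
    intro m hm
    have := hbgt (m+1) (by omega)
    rwa [Nat.cast_add_one] at this
  have hdiv_mono : ∀ m : ℕ, 1 ≤ m → x / ((m:ℝ)+1) ≤ x / (m:ℝ) := by
    intro m hm
    have hm0 : (0:ℝ) < m := by exact_mod_cast hm
    apply div_le_div_of_nonneg_left hx0.le hm0
    linarith
  set δ : ℕ → ℝ := fun m => (b m - b (m+1)) - (x / (m:ℝ) - x / ((m:ℝ)+1)) with hδ_def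
  have hδ1 : ∀ m : ℕ, 1 ≤ m → |δ m| ≤ 1 := by
    intro m hm
    have h1 := hble m hm
    have h2 := hbgt m hm
    have h3 := hble' m hm
    have h4 := hbgt' m hm
    simp only [hδ_def]
    rw [abs_le]
    constructor <;> linarith
  have hδ2 : ∀ m : ℕ, 1 ≤ m →
      |δ m| ≤ (b m - b (m+1)) + (x / (m:ℝ) - x / ((m:ℝ)+1)) := by
    intro m hm
    have h5 : 0 ≤ b m - b (m+1) := by linarith [hbmono m hm]
    have h6 : 0 ≤ x / (m:ℝ) - x / ((m:ℝ)+1) := by linarith [hdiv_mono m hm]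
    simp only [hδ_def]
    rw [abs_le]
    constructor <;> linarith
  -- decomposition of the LHS
  have hIdent : (∑ n ∈ Finset.Icc 1 N, f ⌊x / (n:ℝ)⌋₊)
      = ∑ m ∈ Finset.Icc 1 N, ((δ m : ℝ) : ℂ) * f m
        + ∑ m ∈ Finset.Icc 1 N, (((x / (m:ℝ) - x / ((m:ℝ)+1)) : ℝ) : ℂ) * f m := by
    have e0 : (∑ n ∈ Finset.Icc 1 N, f ⌊x / (n:ℝ)⌋₊) = ∑ n ∈ Finset.Icc 1 N, f (N / n) :=
      Finset.sum_congr rfl fun n _ => by rw [Nat.floor_div_natCast]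
    rw [e0, sum_floor_ident' f N, ← Finset.sum_add_distrib]
    apply Finset.sum_congr rfl
    intro m hm
    rw [Finset.mem_Icc] at hm
    have hdmono : N / (m+1) ≤ N / m := Nat.div_le_div_left (Nat.le_succ m) (by omega)
    have ecast : ((N / m - N / (m + 1) : ℕ) : ℂ) = ((b m : ℝ) : ℂ) - ((b (m+1) : ℝ) : ℂ) := by
      rw [Nat.cast_sub hdmono]
      simp only [hb_def]
      push_cast
      ring
    rw [ecast]
    simp only [hδ_def]
    push_cast
    ring
  have hsplit : ∑ m ∈ Finset.Icc 1 N, ((δ m : ℝ):ℂ) * f m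
      = ∑ m ∈ Finset.Icc 1 M, ((δ m : ℝ):ℂ) * f m
        + ∑ m ∈ Finset.Ioc M N, ((δ m : ℝ):ℂ) * f m := by
    rw [← Finset.sum_union ?hdisj]
    · rw [show Finset.Icc 1 M ∪ Finset.Ioc M N = Finset.Icc 1 N by
        ext k
        simp only [Finset.mem_union, Finset.mem_Icc, Finset.mem_Ioc]
        omega]
    case hdisj =>
      rw [Finset.disjoint_left]
      intro a ha hb'
      rw [Finset.mem_Icc] at ha
      rw [Finset.mem_Ioc] at hb'
      omega
  have hPartial : ∑ m ∈ Finset.Icc 1 N, (((x / (m:ℝ) - x / ((m:ℝ)+1)) : ℝ) : ℂ) * f m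
      = (∑ n ∈ Finset.range N, g n) * (x:ℂ) := by
    have hIccIco : Finset.Icc 1 N = Finset.Ico 1 (N+1) := by
      ext k
      simp only [Finset.mem_Icc, Finset.mem_Ico]
      omega
    rw [hIccIco, Finset.sum_Ico_eq_sum_range]
    simp only [Nat.add_sub_cancel]
    rw [Finset.sum_mul]
    apply Finset.sum_congr rfl
    intro i _
    simp only [hg_def]
    have hi1 : ((i:ℝ) + 1) ≠ 0 := by positivity
    have hi2 : ((i:ℝ) + 2) ≠ 0 := by positivity
    have e3 : x / ((1+i:ℕ):ℝ) - x / (((1+i:ℕ):ℝ)+1) = x / (((i:ℝ)+1) * ((i:ℝ)+2)) := by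
      push_cast
      rw [div_sub_div _ _ (by positivity) (by positivity)]
      congr 1
      · ring
      · ring
    rw [e3, show f (1+i) = f (i+1) by rw [Nat.add_comm]]
    have hci1 : ((i:ℂ)+1) ≠ 0 := by
      rw [show ((i:ℂ)+1) = (((i:ℝ)+1 : ℝ):ℂ) by push_cast; ring]
      exact Complex.ofReal_ne_zero.2 hi1
    have hci2 : ((i:ℂ)+2) ≠ 0 := by
      rw [show ((i:ℂ)+2) = (((i:ℝ)+2 : ℝ):ℂ) by push_cast; ring]
      exact Complex.ofReal_ne_zero.2 hi2
    push_cast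
    field_simp
  have hTail : (∑' n, g n) * (x:ℂ) - (∑ n ∈ Finset.range N, g n) * (x:ℂ)
      = (∑' n, g (n + N)) * (x:ℂ) := by
    rw [← sub_mul]
    congr 1
    have h := hsum.sum_add_tsum_nat_add N
    rw [← h]
    ring
  have hDecomp : (∑ n ∈ Finset.Icc 1 N, f ⌊x / (n:ℝ)⌋₊) - (∑' n, g n) * (x:ℂ)
      = ∑ m ∈ Finset.Icc 1 M, ((δ m : ℝ):ℂ) * f m
        + ∑ m ∈ Finset.Ioc M N, ((δ m : ℝ):ℂ) * f m
        - (∑' n, g (n+N)) * (x:ℂ) := by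
    rw [hIdent, hsplit, hPartial, ← hTail]
    ring
  have hT1 : ‖∑ m ∈ Finset.Icc 1 M, ((δ m : ℝ):ℂ) * f m‖ ≤ Real.sqrt C * x ^ β := by
    have h1 : ∀ m ∈ Finset.Icc 1 M, ‖((δ m : ℝ):ℂ) * f m‖ ≤ ‖f m‖ := by
      intro m hm
      rw [Finset.mem_Icc] at hm
      rw [norm_mul, Complex.norm_real]
      calc ‖δ m‖ * ‖f m‖ ≤ 1 * ‖f m‖ := by
            apply mul_le_mul_of_nonneg_right _ (norm_nonneg _)
            rw [Real.norm_eq_abs]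
            exact hδ1 m hm.1
        _ = ‖f m‖ := one_mul _
    have h2 : ‖∑ m ∈ Finset.Icc 1 M, ((δ m : ℝ):ℂ) * f m‖ ≤ ∑ m ∈ Finset.Icc 1 M, ‖f m‖ :=
      (norm_sum_le _ _).trans (Finset.sum_le_sum h1)
    have hcs := Finset.sum_mul_sq_le_sq_mul_sq (Finset.Icc 1 M) (fun m => ‖f m‖) (fun _ => 1)
    simp only [mul_one, one_pow] at hcs
    rw [Finset.sum_const, Nat.card_Icc, Nat.add_sub_cancel, nsmul_eq_mul, mul_one] at hcs
    have hfM := hf (M:ℝ) (by exact_mod_cast hM1)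
    rw [Nat.floor_natCast] at hfM
    have key : (∑ m ∈ Finset.Icc 1 M, ‖f m‖)^2 ≤ (Real.sqrt C * x ^ β)^2 := by
      have e1 : (Real.sqrt C * x ^ β)^2 = C * (x^β * x^β) := by
        rw [mul_pow, Real.sq_sqrt hC.le]
        ring
      have e2 : x^β * x^β = x^(β+β) := (Real.rpow_add hx0 _ _).symm
      have e3 : (M:ℝ)^η * (M:ℝ) ≤ x^(β+β) := by
        calc (M:ℝ)^η * (M:ℝ) ≤ (x^((2:ℝ)/3))^η * x^((2:ℝ)/3) := by
              apply mul_le_mul (Real.rpow_le_rpow (Nat.cast_nonneg M) hMle hη₀.le)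
                hMle (Nat.cast_nonneg M) (by positivity)
          _ = x^(((2:ℝ)/3)*η) * x^((2:ℝ)/3) := by rw [← Real.rpow_mul hx0.le]
          _ = x^(((2:ℝ)/3)*η + (2:ℝ)/3) := (Real.rpow_add hx0 _ _).symm
          _ = x^(β+β) := by
              congr 1
              rw [hβ_def]
              ring
      calc (∑ m ∈ Finset.Icc 1 M, ‖f m‖)^2
          ≤ (∑ m ∈ Finset.Icc 1 M, ‖f m‖^2) * (M:ℝ) := hcs
        _ ≤ (C * (M:ℝ)^η) * (M:ℝ) := mul_le_mul_of_nonneg_right hfM (Nat.cast_nonneg M)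
        _ = C * ((M:ℝ)^η * (M:ℝ)) := by ring
        _ ≤ C * x^(β+β) := mul_le_mul_of_nonneg_left e3 hC.le
        _ = (Real.sqrt C * x ^ β)^2 := by rw [e1, e2]
    have h3 : ∑ m ∈ Finset.Icc 1 M, ‖f m‖ ≤ Real.sqrt C * x ^ β :=
      le_of_pow_le_pow_left₀ two_ne_zero (by positivity) key
    linarith
  have hT2 : ‖∑ m ∈ Finset.Ioc M N, ((δ m : ℝ):ℂ) * f m‖
      ≤ 4 * Real.sqrt C / (1 - p) * x ^ β := by
    -- tail-sum estimate for exponent p - 2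
    have htail_sum : ∑ m ∈ Finset.Ioc M N, (m:ℝ)^(p-2) ≤ (M:ℝ)^(p-1)/(1-p) := by
      have h := sum_Ioc_rpow_le' (r := p-1) (by linarith) (by linarith) (N := N) hM1
      rw [show p-1-1 = p-2 by ring, show -(p-1) = 1-p by ring] at h
      exact h
    -- pointwise bound on terms
    have hstep1 : ∀ m ∈ Finset.Ioc M N, ‖((δ m:ℝ):ℂ) * f m‖
        ≤ Real.sqrt C * ((m:ℝ)^p * ((b m - b (m+1)) + (x/(m:ℝ) - x/((m:ℝ)+1)))) := by
      intro m hm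
      rw [Finset.mem_Ioc] at hm
      have hm1 : 1 ≤ m := by omega
      have hnn : 0 ≤ (b m - b (m+1)) + (x/(m:ℝ) - x/((m:ℝ)+1)) := by
        have := hbmono m hm1
        have := hdiv_mono m hm1
        linarith
      rw [norm_mul, Complex.norm_real, Real.norm_eq_abs]
      calc |δ m| * ‖f m‖
          ≤ ((b m - b (m+1)) + (x/(m:ℝ) - x/((m:ℝ)+1))) * (Real.sqrt C * (m:ℝ)^p) :=
            mul_le_mul (hδ2 m hm1) (hpoint m hm1) (norm_nonneg _) hnn
        _ = Real.sqrt C * ((m:ℝ)^p * ((b m - b (m+1)) + (x/(m:ℝ) - x/((m:ℝ)+1)))) := by ring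
    have hT2a : ‖∑ m ∈ Finset.Ioc M N, ((δ m : ℝ):ℂ) * f m‖
        ≤ Real.sqrt C * (∑ m ∈ Finset.Ioc M N, (m:ℝ)^p * (b m - b (m+1))
            + ∑ m ∈ Finset.Ioc M N, (m:ℝ)^p * (x/(m:ℝ) - x/((m:ℝ)+1))) := by
      calc ‖∑ m ∈ Finset.Ioc M N, ((δ m : ℝ):ℂ) * f m‖
          ≤ ∑ m ∈ Finset.Ioc M N, ‖((δ m : ℝ):ℂ) * f m‖ := norm_sum_le _ _
        _ ≤ ∑ m ∈ Finset.Ioc M N,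
              Real.sqrt C * ((m:ℝ)^p * ((b m - b (m+1)) + (x/(m:ℝ) - x/((m:ℝ)+1)))) :=
            Finset.sum_le_sum hstep1
        _ = Real.sqrt C * (∑ m ∈ Finset.Ioc M N, (m:ℝ)^p * (b m - b (m+1))
              + ∑ m ∈ Finset.Ioc M N, (m:ℝ)^p * (x/(m:ℝ) - x/((m:ℝ)+1))) := by
            rw [← Finset.mul_sum, ← Finset.sum_add_distrib]
            congr 1
            apply Finset.sum_congr rfl
            intro m _
            ring
    -- bound for the "d"-part via Abel summation
    have hSd : ∑ m ∈ Finset.Ioc M N, (m:ℝ)^p * (b m - b (m+1))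
        ≤ x * (M:ℝ)^(p-1) + p * x * ((M:ℝ)^(p-1)/(1-p)) := by
      set G : ℕ → ℝ := fun k => (k:ℝ)^p * b k with hG_def
      have e1 : ∀ m ∈ Finset.Ioc M N, (m:ℝ)^p * (b m - b (m+1))
          = (G m - G (m+1)) + (((m+1:ℕ):ℝ)^p - (m:ℝ)^p) * b (m+1) := by
        intro m _
        simp only [hG_def]
        ring
      rw [Finset.sum_congr rfl e1, Finset.sum_add_distrib, sum_Ioc_telescope' G hMN]
      have hGN : G (N+1) = 0 := by
        simp only [hG_def, hb_def]
        rw [Nat.div_eq_of_lt (Nat.lt_succ_self N)]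
        simp
      have hGM : G (M+1) ≤ x * (M:ℝ)^(p-1) := by
        simp only [hG_def]
        have hbM : b (M+1) ≤ x / ((M:ℝ)+1) := hble' M hM1
        have hM1R : (0:ℝ) < (M:ℝ)+1 := by positivity
        calc ((M+1:ℕ):ℝ)^p * b (M+1) ≤ ((M+1:ℕ):ℝ)^p * (x/((M:ℝ)+1)) :=
              mul_le_mul_of_nonneg_left hbM (Real.rpow_nonneg (Nat.cast_nonneg _) _)
          _ = x * (((M:ℝ)+1)^(p-1)) := by
              rw [show ((M+1:ℕ):ℝ) = (M:ℝ)+1 by push_cast; ring,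
                Real.rpow_sub hM1R, Real.rpow_one]
              field_simp
          _ ≤ x * ((M:ℝ)^(p-1)) :=
              mul_le_mul_of_nonneg_left
                (Real.rpow_le_rpow_of_nonpos hMpos (by linarith) (by linarith)) hx0.le
      have hrest : ∑ m ∈ Finset.Ioc M N, (((m+1:ℕ):ℝ)^p - (m:ℝ)^p) * b (m+1)
          ≤ p * x * ((M:ℝ)^(p-1)/(1-p)) := by
        have e2 : ∀ m ∈ Finset.Ioc M N, (((m+1:ℕ):ℝ)^p - (m:ℝ)^p) * b (m+1)
            ≤ (p * x) * (m:ℝ)^(p-2) := by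
          intro m hm
          rw [Finset.mem_Ioc] at hm
          have hm1 : 1 ≤ m := by omega
          have hmR : (1:ℝ) ≤ (m:ℝ) := by exact_mod_cast hm1
          have hmpos : (0:ℝ) < (m:ℝ) := by linarith
          have hinc : ((m+1:ℕ):ℝ)^p - (m:ℝ)^p ≤ p * (m:ℝ)^(p-1) := by
            have h := rpow_succ_sub_le' hp0.le hp1.le hmR
            rw [show ((m+1:ℕ):ℝ) = (m:ℝ)+1 by push_cast; ring]
            exact h
          have hb1 : b (m+1) ≤ x / (m:ℝ) := le_trans (hble' m hm1) (hdiv_mono m hm1)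
          calc (((m+1:ℕ):ℝ)^p - (m:ℝ)^p) * b (m+1) ≤ (p * (m:ℝ)^(p-1)) * (x/(m:ℝ)) :=
                mul_le_mul hinc hb1 (hb0 _) (by positivity)
            _ = (p*x) * ((m:ℝ)^(p-1)/(m:ℝ)) := by ring
            _ = (p*x) * (m:ℝ)^(p-2) := by
                rw [show p - 2 = p - 1 - 1 by ring, Real.rpow_sub hmpos (p-1) 1,
                  Real.rpow_one]
        calc ∑ m ∈ Finset.Ioc M N, (((m+1:ℕ):ℝ)^p - (m:ℝ)^p) * b (m+1)
            ≤ ∑ m ∈ Finset.Ioc M N, (p*x) * (m:ℝ)^(p-2) := Finset.sum_le_sum e2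
          _ = (p*x) * ∑ m ∈ Finset.Ioc M N, (m:ℝ)^(p-2) := by rw [← Finset.mul_sum]
          _ ≤ (p*x) * ((M:ℝ)^(p-1)/(1-p)) :=
              mul_le_mul_of_nonneg_left htail_sum (by positivity)
          _ = p * x * ((M:ℝ)^(p-1)/(1-p)) := by ring
      linarith
    -- bound for the "t"-part
    have hSt : ∑ m ∈ Finset.Ioc M N, (m:ℝ)^p * (x/(m:ℝ) - x/((m:ℝ)+1))
        ≤ x * ((M:ℝ)^(p-1)/(1-p)) := by
      have e2 : ∀ m ∈ Finset.Ioc M N, (m:ℝ)^p * (x/(m:ℝ) - x/((m:ℝ)+1))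
          ≤ x * (m:ℝ)^(p-2) := by
        intro m hm
        rw [Finset.mem_Ioc] at hm
        have hm1 : 1 ≤ m := by omega
        have hmR : (1:ℝ) ≤ (m:ℝ) := by exact_mod_cast hm1
        have hmpos : (0:ℝ) < (m:ℝ) := by linarith
        have e3 : x/(m:ℝ) - x/((m:ℝ)+1) = x / ((m:ℝ)*((m:ℝ)+1)) := by
          rw [div_sub_div _ _ (by positivity) (by positivity)]
          congr 1
          ring
        have e4 : x / ((m:ℝ)*((m:ℝ)+1)) ≤ x / ((m:ℝ)*(m:ℝ)) := by
          apply div_le_div_of_nonneg_left hx0.le (by positivity)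
          nlinarith
        calc (m:ℝ)^p * (x/(m:ℝ) - x/((m:ℝ)+1)) ≤ (m:ℝ)^p * (x/((m:ℝ)*(m:ℝ))) := by
              apply mul_le_mul_of_nonneg_left _ (Real.rpow_nonneg hmpos.le _)
              rw [e3]
              exact e4
          _ = x * ((m:ℝ)^p / (m:ℝ) / (m:ℝ)) := by ring
          _ = x * (m:ℝ)^(p-2) := by
              rw [show p - 2 = p - 1 - 1 by ring, Real.rpow_sub hmpos (p-1) 1,
                Real.rpow_sub hmpos p 1, Real.rpow_one]
      calc ∑ m ∈ Finset.Ioc M N, (m:ℝ)^p * (x/(m:ℝ) - x/((m:ℝ)+1))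
          ≤ ∑ m ∈ Finset.Ioc M N, x * (m:ℝ)^(p-2) := Finset.sum_le_sum e2
        _ = x * ∑ m ∈ Finset.Ioc M N, (m:ℝ)^(p-2) := by rw [← Finset.mul_sum]
        _ ≤ x * ((M:ℝ)^(p-1)/(1-p)) := mul_le_mul_of_nonneg_left htail_sum hx0.le
    -- convert M-powers to x-powers
    have h2half : (1:ℝ)/2 ≤ (2:ℝ)^(p-1) := by
      have := Real.rpow_le_rpow_of_exponent_le (show (1:ℝ) ≤ 2 by norm_num)
        (show -(1:ℝ) ≤ p-1 by linarith)
      rw [Real.rpow_neg (by norm_num : (0:ℝ) ≤ 2), Real.rpow_one] at this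
      linarith
    have h2pos : (0:ℝ) < (2:ℝ)^(p-1) := Real.rpow_pos_of_pos (by norm_num) _
    have hMp : (M:ℝ)^(p-1) ≤ 2 * x^(((2:ℝ)/3)*(p-1)) := by
      have h1 : (M:ℝ)^(p-1) ≤ (x^((2:ℝ)/3)/2)^(p-1) :=
        Real.rpow_le_rpow_of_nonpos (by positivity) hMge (by linarith)
      have h2 : (x^((2:ℝ)/3)/2)^(p-1) = x^(((2:ℝ)/3)*(p-1)) / (2:ℝ)^(p-1) := by
        rw [Real.div_rpow hx23pos.le (show (0:ℝ) ≤ 2 by norm_num) _,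
          ← Real.rpow_mul hx0.le]
      have hxx : (0:ℝ) < x^(((2:ℝ)/3)*(p-1)) := Real.rpow_pos_of_pos hx0 _
      have h3 : x^(((2:ℝ)/3)*(p-1)) / (2:ℝ)^(p-1) ≤ 2 * x^(((2:ℝ)/3)*(p-1)) := by
        rw [div_le_iff₀ h2pos]
        nlinarith
      linarith
    have hxM : x * (M:ℝ)^(p-1) ≤ 2 * x^β := by
      have e5 : (1:ℝ) + ((2:ℝ)/3)*(p-1) = β := by
        rw [hβ_def, hp_def]
        ring
      calc x * (M:ℝ)^(p-1) ≤ x * (2 * x^(((2:ℝ)/3)*(p-1))) :=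
            mul_le_mul_of_nonneg_left hMp hx0.le
        _ = 2 * (x^(1:ℝ) * x^(((2:ℝ)/3)*(p-1))) := by
            rw [Real.rpow_one]
            ring
        _ = 2 * x^((1:ℝ) + ((2:ℝ)/3)*(p-1)) := by rw [← Real.rpow_add hx0]
        _ = 2 * x^β := by rw [e5]
    -- put everything together
    have hMppos : (0:ℝ) ≤ x * (M:ℝ)^(p-1) := by positivity
    have htotal : ∑ m ∈ Finset.Ioc M N, (m:ℝ)^p * (b m - b (m+1))
        + ∑ m ∈ Finset.Ioc M N, (m:ℝ)^p * (x/(m:ℝ) - x/((m:ℝ)+1))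
        ≤ (2/(1-p)) * (x * (M:ℝ)^(p-1)) := by
      have e6 : x * (M:ℝ)^(p-1) + p * x * ((M:ℝ)^(p-1)/(1-p)) + x * ((M:ℝ)^(p-1)/(1-p))
          = (2/(1-p)) * (x * (M:ℝ)^(p-1)) := by
        field_simp
        ring
      linarith
    calc ‖∑ m ∈ Finset.Ioc M N, ((δ m : ℝ):ℂ) * f m‖
        ≤ Real.sqrt C * (∑ m ∈ Finset.Ioc M N, (m:ℝ)^p * (b m - b (m+1))
            + ∑ m ∈ Finset.Ioc M N, (m:ℝ)^p * (x/(m:ℝ) - x/((m:ℝ)+1))) := hT2a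
      _ ≤ Real.sqrt C * ((2/(1-p)) * (x * (M:ℝ)^(p-1))) :=
          mul_le_mul_of_nonneg_left htotal hsC
      _ ≤ Real.sqrt C * ((2/(1-p)) * (2 * x^β)) := by
          apply mul_le_mul_of_nonneg_left _ hsC
          exact mul_le_mul_of_nonneg_left hxM (by positivity)
      _ = 4 * Real.sqrt C / (1 - p) * x ^ β := by
          field_simp
          ring
  have hT3 : ‖(∑' n, g (n+N)) * (x:ℂ)‖ ≤ 2 * Real.sqrt C / (1 - p) * x ^ β := by
    have hsum_shift : Summable (fun n => ‖g (n+N)‖) := (summable_nat_add_iff N).2 hsummable_norm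
    have h1 : ‖∑' n, g (n+N)‖ ≤ ∑' n, ‖g (n+N)‖ := norm_tsum_le_tsum_norm hsum_shift
    have hbound_sum : Summable (fun n : ℕ => Real.sqrt C * ((n+N+1:ℕ):ℝ)^(p-2)) := by
      apply Summable.mul_left
      exact (summable_nat_add_iff (N+1)).2 (Real.summable_nat_rpow.2 (by linarith))
    have h2 : ∑' n, ‖g (n+N)‖ ≤ ∑' n : ℕ, Real.sqrt C * ((n+N+1:ℕ):ℝ)^(p-2) :=
      Summable.tsum_le_tsum (fun n => hgnorm (n+N)) hsum_shift hbound_sum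
    have h3 : ∑' n : ℕ, Real.sqrt C * ((n+N+1:ℕ):ℝ)^(p-2)
        = Real.sqrt C * ∑' n : ℕ, ((n+N+1:ℕ):ℝ)^(p-2) := tsum_mul_left
    have h4 : ∑' n : ℕ, ((n+N+1:ℕ):ℝ)^(p-2) ≤ (N:ℝ)^(p-1)/(1-p) := by
      have h := tsum_tail_rpow' (r := p-1) (by linarith) (by linarith) hN1
      rw [show p-1-1 = p-2 by ring, show -(p-1) = 1-p by ring] at h
      exact h
    have h5 : ‖(x:ℂ)‖ = x := by
      rw [Complex.norm_real, Real.norm_eq_abs, abs_of_pos hx0]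
    have h2half : (1:ℝ)/2 ≤ (2:ℝ)^(p-1) := by
      have := Real.rpow_le_rpow_of_exponent_le (show (1:ℝ) ≤ 2 by norm_num)
        (show -(1:ℝ) ≤ p-1 by linarith)
      rw [Real.rpow_neg (by norm_num : (0:ℝ) ≤ 2), Real.rpow_one] at this
      linarith
    have h2pos : (0:ℝ) < (2:ℝ)^(p-1) := Real.rpow_pos_of_pos (by norm_num) _
    have hxp1pos : (0:ℝ) < x^(p-1) := Real.rpow_pos_of_pos hx0 _
    have hNp : (N:ℝ)^(p-1) ≤ 2 * x^(p-1) := by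
      have h6 : (N:ℝ)^(p-1) ≤ (x/2)^(p-1) :=
        Real.rpow_le_rpow_of_nonpos (by positivity) hNhalf (by linarith)
      have h7 : (x/2)^(p-1) = x^(p-1)/(2:ℝ)^(p-1) :=
        Real.div_rpow hx0.le (show (0:ℝ) ≤ 2 by norm_num) _
      have h8 : x^(p-1)/(2:ℝ)^(p-1) ≤ 2 * x^(p-1) := by
        rw [div_le_iff₀ h2pos]
        nlinarith
      linarith
    have hnorm_tsum : ‖∑' n, g (n+N)‖ ≤ Real.sqrt C * ((N:ℝ)^(p-1)/(1-p)) := by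
      calc ‖∑' n, g (n+N)‖ ≤ ∑' n, ‖g (n+N)‖ := h1
        _ ≤ ∑' n : ℕ, Real.sqrt C * ((n+N+1:ℕ):ℝ)^(p-2) := h2
        _ = Real.sqrt C * ∑' n : ℕ, ((n+N+1:ℕ):ℝ)^(p-2) := h3
        _ ≤ Real.sqrt C * ((N:ℝ)^(p-1)/(1-p)) := mul_le_mul_of_nonneg_left h4 hsC
    calc ‖(∑' n, g (n+N)) * (x:ℂ)‖ = ‖∑' n, g (n+N)‖ * x := by rw [norm_mul, h5]
      _ ≤ (Real.sqrt C * ((N:ℝ)^(p-1)/(1-p))) * x :=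
          mul_le_mul_of_nonneg_right hnorm_tsum hx0.le
      _ ≤ (Real.sqrt C * ((2 * x^(p-1))/(1-p))) * x := by
          apply mul_le_mul_of_nonneg_right _ hx0.le
          apply mul_le_mul_of_nonneg_left _ hsC
          gcongr
      _ = (2 * Real.sqrt C / (1-p)) * (x^(p-1) * x^(1:ℝ)) := by
          rw [Real.rpow_one]
          ring
      _ = (2 * Real.sqrt C / (1-p)) * x^(p-1+1) := by rw [← Real.rpow_add hx0]
      _ = (2 * Real.sqrt C / (1-p)) * x^p := by norm_num
      _ ≤ (2 * Real.sqrt C / (1-p)) * x^β := by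
          apply mul_le_mul_of_nonneg_left (Real.rpow_le_rpow_of_exponent_le hx1 _) (by positivity)
          rw [hβ_def, hp_def]
          linarith
  have hβpos : (0:ℝ) < x ^ β := Real.rpow_pos_of_pos hx0 β
  rw [hDecomp]
  have hfinal : ‖∑ m ∈ Finset.Icc 1 M, ((δ m : ℝ):ℂ) * f m
        + ∑ m ∈ Finset.Ioc M N, ((δ m : ℝ):ℂ) * f m
        - (∑' n, g (n+N)) * (x:ℂ)‖
      ≤ ‖∑ m ∈ Finset.Icc 1 M, ((δ m : ℝ):ℂ) * f m‖
        + ‖∑ m ∈ Finset.Ioc M N, ((δ m : ℝ):ℂ) * f m‖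
        + ‖(∑' n, g (n+N)) * (x:ℂ)‖ := by
    calc ‖_ + _ - _‖ ≤ ‖(∑ m ∈ Finset.Icc 1 M, ((δ m : ℝ):ℂ) * f m)
          + ∑ m ∈ Finset.Ioc M N, ((δ m : ℝ):ℂ) * f m‖ + ‖(∑' n, g (n+N)) * (x:ℂ)‖ :=
          norm_sub_le _ _
      _ ≤ _ := by
          have := norm_add_le (∑ m ∈ Finset.Icc 1 M, ((δ m : ℝ):ℂ) * f m)
            (∑ m ∈ Finset.Ioc M N, ((δ m : ℝ):ℂ) * f m)
          linarith
  rw [Real.norm_eq_abs, abs_of_pos hβpos]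
  calc ‖_‖ ≤ _ := hfinal
    _ ≤ Real.sqrt C * x ^ β + 4 * Real.sqrt C / (1 - p) * x ^ β
        + 2 * Real.sqrt C / (1 - p) * x ^ β := by linarith
    _ = (Real.sqrt C + 4 * Real.sqrt C / (1 - p) + 2 * Real.sqrt C / (1 - p)) * x ^ β := by
        ring
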